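/- For all 3×3 real matrices S, S̃ and all h, h̃ ∈ ℝ³, setting Γ_{ijk} := S_{ij} h_k − S̃_{ij} h̃_k: |Θ³ ⋮ Γ|² = 16 ‖S_skw h − S̃_skw h̃‖², where (Θ³ ⋮ Γ)_{ijk} := Σ_{l,m,n} Θ³_{ijklmn} Γ_{lmn}. -/

import Mathlib

open Matrix

/-- Kronecker delta on `Fin 3`. -/
def kron (i j : Fin 3) : ℝ := if i = j then 1 else 0

/-- The sixth-order tensor
`Θ³_{ijklmn} = δ_{il} δ_{mn} δ_{jk} − δ_{mi} δ_{ln} δ_{jk} − δ_{lj} δ_{mn} δ_{ik} + δ_{jm} δ_{ln} δ_{ik}`. -/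
def Theta3 (i j k l m n : Fin 3) : ℝ :=
  kron i l * kron m n * kron j k - kron m i * kron l n * kron j k
    - kron l j * kron m n * kron i k + kron j m * kron l n * kron i k

/-- Interpret a vector in `ℝ³` as an element of Euclidean space (with the Euclidean norm). -/
noncomputable def e3 (v : Fin 3 → ℝ) : EuclideanSpace ℝ (Fin 3) :=
  (WithLp.equiv 2 (Fin 3 → ℝ)).symm v

lemma e3_norm_sq (v : Fin 3 → ℝ) : ‖e3 v‖ ^ 2 = ∑ i, v i ^ 2 := by
  rw [EuclideanSpace.norm_eq]
  rw [Real.sq_sqrt (by positivity)]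
  simp [e3, sq_abs]

set_option maxHeartbeats 4000000 in
/-- For all `3×3` matrices `S, S̃` and `h, h̃ ∈ ℝ³`, with `Γ_{ijk} = S_{ij} h_k − S̃_{ij} h̃_k`:
`|Θ³ ⋮ Γ|² = 16 ‖S_skw h − S̃_skw h̃‖²`. -/
theorem Theta3_contraction_norm (S S' : Matrix (Fin 3) (Fin 3) ℝ) (h h' : Fin 3 → ℝ)
    (Sskw S'skw : Matrix (Fin 3) (Fin 3) ℝ)
    (hskw : Sskw = (2 : ℝ)⁻¹ • (S - Sᵀ)) (hskw' : S'skw = (2 : ℝ)⁻¹ • (S' - S'ᵀ))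
    (Γ : Fin 3 → Fin 3 → Fin 3 → ℝ)
    (hΓ : ∀ i j k, Γ i j k = S i j * h k - S' i j * h' k) :
    (∑ i, ∑ j, ∑ k, (∑ l, ∑ m, ∑ n, Theta3 i j k l m n * Γ l m n) ^ 2)
      = 16 * ‖e3 (Sskw *ᵥ h - S'skw *ᵥ h')‖ ^ 2 := by
  subst hskw hskw'
  rw [e3_norm_sq]
  simp only [hΓ, Theta3, kron, Fin.sum_univ_three, mulVec, dotProduct,
    Pi.sub_apply, Matrix.smul_apply, Matrix.sub_apply, transpose_apply, smul_eq_mul,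
    Fin.isValue, one_mul, zero_mul, mul_one, mul_zero, if_true, if_false,
    show ((0:Fin 3) = 1) = False from by simp, show ((0:Fin 3) = 2) = False from by simp,
    show ((1:Fin 3) = 0) = False from by simp, show ((1:Fin 3) = 2) = False from by simp,
    show ((2:Fin 3) = 0) = False from by simp, show ((2:Fin 3) = 1) = False from by simp]
  ring
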